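/- For every real number t with 0 < t < 1, the closed interval [t, t + 4t²] intersects the union ⋃_{n≥1} ⋃_{k=0}^{2^n - 1} A_{n,k}. -/

import Mathlib

open Filter Topology MeasureTheory
open scoped NNReal ENNReal

noncomputable section

/-- The underlying space of the first Heisenberg group: `ℝ³`. -/
abbrev Heis : Type := ℝ × ℝ × ℝ

/-- Heisenberg group multiplication:
`(x,y,t)·(x',y',t') = (x+x', y+y', t+t' − 2(xy' − yx'))`. -/
def hmul (p q : Heis) : Heis :=
  (p.1 + q.1, p.2.1 + q.2.1, p.2.2 + q.2.2 - 2 * (p.1 * q.2.1 - p.2.1 * q.1))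

/-- Heisenberg group inverse: `(x,y,t)⁻¹ = (−x,−y,−t)`. -/
def hinv (p : Heis) : Heis := (-p.1, -p.2.1, -p.2.2)

/-- Koranyi norm: `‖(x,y,t)‖ = ((x²+y²)² + t²)^(1/4)`. -/
def knorm (p : Heis) : ℝ := ((p.1 ^ 2 + p.2.1 ^ 2) ^ 2 + p.2.2 ^ 2) ^ ((1 : ℝ) / 4)

/-- Koranyi distance: `d_k(a,b) = ‖a⁻¹·b‖_k`. -/
def dk (p q : Heis) : ℝ := knorm (hmul (hinv p) q)

/-- Euclidean distance on `ℝ³`. -/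
def de (p q : Heis) : ℝ :=
  Real.sqrt ((p.1 - q.1) ^ 2 + (p.2.1 - q.2.1) ^ 2 + (p.2.2 - q.2.2) ^ 2)

/-- Dilation `δ_r(x,y,t) = (rx, ry, r²t)`. -/
def hdil (r : ℝ) (p : Heis) : Heis := (r * p.1, r * p.2.1, r ^ 2 * p.2.2)

/-- Open ball with respect to a distance function `d`. -/
def ballD {M : Type*} (d : M → M → ℝ) (x : M) (r : ℝ) : Set M := {y | d x y < r}

/-- `E` is `lam`-porous at `a` with respect to the distance function `d`: there are points
`x n` converging to `a` such that `B(x n, lam * d(x n, a))` misses `E`. -/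
def PorousAtD {M : Type*} (d : M → M → ℝ) (lam : ℝ) (E : Set M) (a : M) : Prop :=
  ∃ x : ℕ → M, Tendsto (fun n => d (x n) a) atTop (𝓝 0) ∧
    ∀ n, ballD d (x n) (lam * d (x n) a) ∩ E = ∅

/-- `E` is porous w.r.t. `d`: a single `lam ∈ (0,1)` works at every point of `E`. -/
def PorousD {M : Type*} (d : M → M → ℝ) (E : Set M) : Prop :=
  ∃ lam : ℝ, 0 < lam ∧ lam < 1 ∧ ∀ a ∈ E, PorousAtD d lam E a

/-- `E` is σ-porous w.r.t. `d`: a countable union of porous sets. -/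
def SigmaPorousD {M : Type*} (d : M → M → ℝ) (E : Set M) : Prop :=
  ∃ f : ℕ → Set M, (∀ n, PorousD d (f n)) ∧ E = ⋃ n, f n

/-- The translated dilated Cantor set `A_{n,k} = 2⁻ⁿ + k·2⁻²ⁿ + 2⁻²ⁿ·C`. -/
def Acantor (n k : ℕ) : Set ℝ :=
  (fun c => (2:ℝ) ^ (-(n:ℤ)) + (k : ℝ) * (2:ℝ) ^ (-(2*n:ℤ)) + (2:ℝ) ^ (-(2*n:ℤ)) * c) ''
    cantorSet

/-- `|(x,y)|` for `p = (x,y,t)`. -/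
def normxy (p : Heis) : ℝ := Real.sqrt (p.1 ^ 2 + p.2.1 ^ 2)

/-- `{0} ∪ ⋃_{n≥1} ⋃_{0 ≤ k ≤ 2ⁿ−1} {p : |(x,y)| ∈ A_{n,k}}`. -/
def cantorUnion : Set Heis :=
  {(0 : Heis)} ∪
    ⋃ (n : ℕ) (_ : 1 ≤ n) (k : ℕ) (_ : k < 2 ^ n), {p : Heis | normxy p ∈ Acantor n k}

/-- The cone `Λ = {(x,y,t) : |t| ≤ |(x,y)|}`. -/
def LambdaCone : Set Heis := {p : Heis | |p.2.2| ≤ normxy p}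

/-- The set `P_e = Λ ∩ ({0} ∪ ⋃ A_{n,k}-cylinders)`. -/
def Pe : Set Heis := LambdaCone ∩ cantorUnion

/-- The cusp `Υ = {(x,y,t) : |t| ≥ 2|(x,y)|²}`. -/
def UpsilonCusp : Set Heis := {p : Heis | 2 * normxy p ^ 2 ≤ |p.2.2|}

/-- The set `P_c = Υ ∩ ({0} ∪ ⋃ A_{n,k}-cylinders)`. -/
def Pc : Set Heis := UpsilonCusp ∩ cantorUnion

/-- `L : H¹ → ℝ` is group linear: additive on the group and homogeneous for dilations. -/
def GroupLinear (L : Heis → ℝ) : Prop :=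
  (∀ p q, L (hmul p q) = L p + L q) ∧ ∀ r : ℝ, 0 < r → ∀ p, L (hdil r p) = r * L p

/-- Pansu differentiability of `f : H¹ → ℝ` at `x₀`. -/
def PansuDiffAt (f : Heis → ℝ) (x₀ : Heis) : Prop :=
  ∃ L : Heis → ℝ, GroupLinear L ∧
    Tendsto (fun h => (f (hmul x₀ h) - f x₀ - L h) / dk h 0) (𝓝[≠] (0 : Heis)) (𝓝 0)

/-- Pansu subdifferentiability of `f : H¹ → ℝ` at `x₀`:
`liminf_{h→0} (f(x₀h) − f(x₀) − L(h))/d_k(h) ≥ 0` for some group linear `L`. -/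
def PansuSubdiffAt (f : Heis → ℝ) (x₀ : Heis) : Prop :=
  ∃ L : Heis → ℝ, GroupLinear L ∧ ∀ ε : ℝ, 0 < ε →
    ∀ᶠ h in 𝓝[≠] (0 : Heis), -ε < (f (hmul x₀ h) - f x₀ - L h) / dk h 0

/-- Subdifferentiability of `F : ℝ → ℝ` at `a`:
`liminf_{t→0} (F(a+t) − F(a) − ℓt)/|t| ≥ 0` for some `ℓ ∈ ℝ`. -/
def RSubdiffAt (F : ℝ → ℝ) (a : ℝ) : Prop :=
  ∃ l : ℝ, ∀ ε : ℝ, 0 < ε →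
    ∀ᶠ t in 𝓝[≠] (0 : ℝ), -ε < (F (a + t) - F a - l * t) / |t|

/-- `f` is Lipschitz with respect to the Koranyi distance. -/
def DkLipschitz (f : Heis → ℝ) : Prop :=
  ∃ K : ℝ, 0 ≤ K ∧ ∀ p q, |f p - f q| ≤ K * dk p q

/-- The first horizontal derivative `X₁f(p)` has value `d`. -/
def HDeriv1 (f : Heis → ℝ) (p : Heis) (d : ℝ) : Prop :=
  Tendsto (fun s : ℝ => (f (hmul p (s, 0, 0)) - f p) / s) (𝓝[≠] (0 : ℝ)) (𝓝 d)

/-- The second horizontal derivative `X₂f(p)` has value `d`. -/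
def HDeriv2 (f : Heis → ℝ) (p : Heis) (d : ℝ) : Prop :=
  Tendsto (fun s : ℝ => (f (hmul p (0, s, 0)) - f p) / s) (𝓝[≠] (0 : ℝ)) (𝓝 d)

lemma one_mem_cantorSet' : (1:ℝ) ∈ cantorSet := by
  refine Set.mem_iInter.mpr fun n => ?_
  induction n with
  | zero => simp [preCantorSet]
  | succ n ih => exact Or.inr ⟨1, ih, by norm_num⟩

/-- For every `0 < t < 1`, the interval `[t, t+4t²]` meets `⋃_{n≥1} ⋃_{0≤k≤2ⁿ−1} A_{n,k}`. -/
theorem stmt_2 (t : ℝ) (ht0 : 0 < t) (ht1 : t < 1) :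
    (Set.Icc t (t + 4 * t ^ 2) ∩
      ⋃ (n : ℕ) (_ : 1 ≤ n) (k : ℕ) (_ : k < 2 ^ n), Acantor n k).Nonempty := by
  -- Find the least `n` with `2^{-n} ≤ t`.
  have hP : ∃ m : ℕ, (2:ℝ) ^ (-(m:ℤ)) ≤ t := by
    obtain ⟨m, hm⟩ := pow_unbounded_of_one_lt (1/t) (by norm_num : (1:ℝ) < 2)
    refine ⟨m, ?_⟩
    rw [zpow_neg, zpow_natCast, inv_le_iff_one_le_mul₀ (by positivity)]
    rw [div_lt_iff₀ ht0] at hm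
    nlinarith
  classical
  set n := Nat.find hP with hn_def
  have hle : (2:ℝ) ^ (-(n:ℤ)) ≤ t := Nat.find_spec hP
  have hn1 : 1 ≤ n := by
    rcases Nat.eq_zero_or_pos n with h0 | h; swap; · exact h
    exfalso
    have := hle
    rw [h0] at this
    norm_num at this
    linarith
  have hlt : t < (2:ℝ) ^ (-((n:ℤ) - 1)) := by
    have := Nat.find_min hP (m := n - 1) (by omega)
    push_neg at this
    have hcast : ((n - 1 : ℕ) : ℤ) = (n : ℤ) - 1 := by omega
    rwa [hcast] at this
  set a : ℝ := (2:ℝ) ^ (-(n:ℤ)) with ha_def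
  set b : ℝ := (2:ℝ) ^ (-(2*n:ℤ)) with hb_def
  have ha_pos : 0 < a := by positivity
  have hb_pos : 0 < b := by positivity
  have hba : b = a ^ 2 := by
    rw [ha_def, hb_def, ← zpow_natCast _ 2, ← zpow_mul]
    ring_nf
  have hab : a = b * 2 ^ n := by
    rw [ha_def, hb_def, ← zpow_natCast (2:ℝ) n, ← zpow_add₀ (by norm_num : (2:ℝ) ≠ 0)]
    ring_nf
  have h2a : (2:ℝ) ^ (-((n:ℤ) - 1)) = 2 * a := by
    rw [ha_def, show -((n:ℤ) - 1) = 1 + -(n:ℤ) by ring,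
      zpow_add₀ (by norm_num : (2:ℝ) ≠ 0)]
    norm_num
  set x : ℝ := (t - a) / b with hx_def
  have hx0 : 0 ≤ x := div_nonneg (by linarith) hb_pos.le
  have hx_lt : x < 2 ^ n := by
    rw [hx_def, div_lt_iff₀ hb_pos]
    have : t < 2 * a := by rw [← h2a]; exact hlt
    nlinarith [hab]
  set k : ℕ := ⌈x⌉₊ with hk_def
  have hk_le : k ≤ 2 ^ n := Nat.ceil_le.mpr (by exact_mod_cast hx_lt.le)
  set y : ℝ := a + (k:ℝ) * b with hy_def
  have hy_ge : t ≤ y := by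
    have : x ≤ (k:ℝ) := Nat.le_ceil x
    have : x * b ≤ (k:ℝ) * b := by nlinarith
    rw [hx_def, div_mul_cancel₀ _ hb_pos.ne'] at this
    linarith [this]
  have hy_le : y ≤ t + 4 * t ^ 2 := by
    have hkx : (k:ℝ) < x + 1 := Nat.ceil_lt_add_one hx0
    have : (k:ℝ) * b < (x + 1) * b := by nlinarith
    rw [hx_def] at this
    have hxb : (t - a) / b * b = t - a := div_mul_cancel₀ _ hb_pos.ne'
    have hat : a ≤ t := hle
    have : y < t + b := by
      rw [hy_def]; nlinarith [this, hxb]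
    have hb_le : b ≤ t ^ 2 := by
      rw [hba]; nlinarith
    nlinarith
  refine ⟨y, ⟨hy_ge, hy_le⟩, ?_⟩
  simp only [Set.mem_iUnion]
  rcases lt_or_eq_of_le hk_le with hk_lt | hk_eq
  · exact ⟨n, hn1, k, hk_lt, ⟨0, zero_mem_cantorSet, by
      simp only [mul_zero, add_zero]; rfl⟩⟩
  · refine ⟨n, hn1, 2 ^ n - 1, by
      have : 1 ≤ 2 ^ n := Nat.one_le_two_pow
      omega, ⟨1, one_mem_cantorSet', ?_⟩⟩
    have hcast : ((2 ^ n - 1 : ℕ) : ℝ) = 2 ^ n - 1 := by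
      have : 1 ≤ 2 ^ n := Nat.one_le_two_pow
      push_cast [this]
      ring
    show a + ((2 ^ n - 1 : ℕ):ℝ) * b + b * 1 = y
    rw [hcast, hy_def, hk_eq]
    push_cast
    ring
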